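/- Let α > 1 be real and β ∈ ℂ with Re β > −1. For every R > 0 and every θ with −π − π/α < θ < −π/α, the entire extension of F_{α,β} satisfies G_{α,β}(R e^{iθ}) = exp(iπ(β+1)/α) · ∫₀^∞ t^β exp(−i t^α + e^{i(θ − π/2 + π/α)} R t) dt, the integral on the right being absolutely convergent. -/

import Mathlib

open MeasureTheory Set
open Filter Topology


noncomputable def Faux (α : ℝ) (β c : ℂ) (φ s : ℝ) : ℂ :=
  Complex.exp ((φ:ℂ) * Complex.I * (β+1)) *
    ((s:ℂ)^β * Complex.exp (-(((s^α : ℝ):ℂ) * Complex.exp (((α*φ : ℝ):ℂ) * Complex.I))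
      - c * Complex.exp ((φ:ℂ) * Complex.I) * s))

noncomputable def Faux' (α : ℝ) (β c : ℂ) (φ s : ℝ) : ℂ :=
  (Complex.I * (β+1) - Complex.I * α * ((s^α:ℝ):ℂ) * Complex.exp (((α*φ:ℝ):ℂ) * Complex.I)
    - Complex.I * c * Complex.exp ((φ:ℂ)*Complex.I) * s) * Faux α β c φ s

noncomputable def Haux (α : ℝ) (β c : ℂ) (φ s : ℝ) : ℂ :=
  (s:ℂ)^(β+1) * Complex.exp (-(((s^α:ℝ):ℂ) * Complex.exp (((α*φ:ℝ):ℂ)*Complex.I))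
    - c * Complex.exp ((φ:ℂ)*Complex.I) * s)

lemma norm_Faux (α : ℝ) (β c : ℂ) (φ : ℝ) {s : ℝ} (hs : 0 < s) :
    ‖Faux α β c φ s‖ = Real.exp (-(φ * (β+1).im)) * (s ^ β.re *
      Real.exp (-(Real.cos (α*φ) * s^α) - (c * Complex.exp ((φ:ℂ)*Complex.I)).re * s)) := by
  unfold Faux
  simp only [norm_mul, Complex.norm_exp,
    Complex.norm_cpow_eq_rpow_re_of_pos hs]
  congr 2
  · simp [Complex.mul_re, Complex.mul_im]
  · simp [Complex.sub_re, Complex.neg_re, Complex.mul_re, Complex.mul_im,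
      Complex.exp_ofReal_mul_I_re, Complex.exp_ofReal_mul_I_im]
    rw [← Complex.ofReal_mul, Complex.exp_ofReal_mul_I_re]; exact mul_comm _ _

lemma norm_Haux (α : ℝ) (β c : ℂ) (φ : ℝ) {s : ℝ} (hs : 0 < s) :
    ‖Haux α β c φ s‖ = s ^ ((β+1).re) *
      Real.exp (-(Real.cos (α*φ) * s^α) - (c * Complex.exp ((φ:ℂ)*Complex.I)).re * s) := by
  unfold Haux
  simp only [norm_mul, Complex.norm_exp,
    Complex.norm_cpow_eq_rpow_re_of_pos hs]
  congr 1
  simp [Complex.sub_re, Complex.neg_re, Complex.mul_re, Complex.mul_im,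
    Complex.exp_ofReal_mul_I_re, Complex.exp_ofReal_mul_I_im]
  rw [← Complex.ofReal_mul, Complex.exp_ofReal_mul_I_re]; exact mul_comm _ _

lemma lemA {α : ℝ} (hα : 1 < α) (C : ℝ) {m : ℝ} (hm : 0 < m) :
    ∃ K : ℝ, 0 ≤ K ∧ ∀ x : ℝ, 0 ≤ x → C * x ≤ m * x^α + K := by
  set x₀ : ℝ := max 1 ((|C|/m) ^ (1/(α-1))) with hx₀def
  have hx₀1 : (1:ℝ) ≤ x₀ := le_max_left _ _
  have hx₀0 : (0:ℝ) ≤ x₀ := by linarith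
  refine ⟨|C| * x₀, by positivity, fun x hx => ?_⟩
  rcases le_total x x₀ with h | h
  · have h1 : C * x ≤ |C| * x₀ :=
      le_trans (mul_le_mul_of_nonneg_right (le_abs_self C) hx)
        (mul_le_mul_of_nonneg_left h (abs_nonneg C))
    have h2 : 0 ≤ m * x ^ α := mul_nonneg hm.le (Real.rpow_nonneg hx α)
    linarith
  · have hx1 : (1:ℝ) ≤ x := hx₀1.trans h
    have h1 : |C|/m ≤ x ^ (α-1) := by
      have h2 : (|C|/m) ^ (1/(α-1)) ≤ x := le_trans (le_max_right _ _) h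
      have h3 : ((|C|/m) ^ (1/(α-1))) ^ (α-1) ≤ x ^ (α-1) :=
        Real.rpow_le_rpow (Real.rpow_nonneg (by positivity) _) h2 (by linarith)
      rwa [← Real.rpow_mul (by positivity), one_div, inv_mul_cancel₀
        (sub_ne_zero.mpr hα.ne'), Real.rpow_one] at h3
    have h2 : |C| * x ≤ m * x ^ α := by
      have h4 := mul_le_mul_of_nonneg_left h1 hm.le
      rw [mul_div_cancel₀ _ hm.ne'] at h4
      calc |C| * x ≤ (m * x^(α-1)) * x := mul_le_mul_of_nonneg_right h4 (by linarith)
        _ = m * x^α := by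
            rw [mul_assoc, ← Real.rpow_add_one (by linarith : x ≠ 0) (α-1)]
            ring_nf
    have h3 : C * x ≤ |C| * x := mul_le_mul_of_nonneg_right (le_abs_self C) (by linarith)
    have h5 : 0 ≤ |C| * x₀ := by positivity
    linarith

lemma lemExp {α m : ℝ} (hα : 1 < α) (hm : 0 < m) (C : ℝ) :
    ∃ K : ℝ, ∀ x : ℝ, 0 ≤ x →
      Real.exp (-(m*x^α) + C*x) ≤ Real.exp K * Real.exp (-x) := by
  obtain ⟨K, -, hK⟩ := lemA hα (C+1) hm
  refine ⟨K, fun x hx => ?_⟩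
  rw [← Real.exp_add]
  apply Real.exp_le_exp.2
  have := hK x hx
  nlinarith

lemma contOn_rpow (a : ℝ) : ContinuousOn (fun x : ℝ => x ^ a) (Ioi 0) := fun x hx =>
  (Real.continuousAt_rpow_const x a (Or.inl (ne_of_gt hx))).continuousWithinAt

lemma lemInt1 {a : ℝ} (ha : -1 < a) {ρ : ℝ} (hρ : 0 < ρ) :
    IntegrableOn (fun x : ℝ => x^a * Real.exp (-(ρ*x))) (Ioi 0) := by
  have h := integrableOn_rpow_mul_exp_neg_mul_rpow ha one_pos hρ
  exact h.congr_fun (fun x hx => by dsimp only; rw [Real.rpow_one, neg_mul]) measurableSet_Ioi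

lemma lemInt2 {α : ℝ} (hα : 1 < α) {a : ℝ} (ha : -1 < a) {m : ℝ} (hm : 0 < m) (C : ℝ) :
    IntegrableOn (fun x : ℝ => x^a * Real.exp (-(m*x^α) + C*x)) (Ioi 0) := by
  obtain ⟨K, hK⟩ := lemExp hα hm C
  have hg : IntegrableOn (fun x : ℝ => Real.exp K * (x^a * Real.exp (-(1*x)))) (Ioi 0) :=
    (lemInt1 ha one_pos).const_mul _
  refine hg.mono' ?_ ?_
  · refine ((contOn_rpow a).mul ?_).aestronglyMeasurable measurableSet_Ioi
    exact Real.continuous_exp.comp_continuousOn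
      (((contOn_rpow α).const_smul m).neg.add (continuous_const.mul continuous_id).continuousOn)
  · refine (ae_restrict_iff' measurableSet_Ioi).mpr (ae_of_all _ fun x hx => ?_)
    have hx0 : (0:ℝ) < x := hx
    rw [Real.norm_eq_abs, abs_of_nonneg (by positivity)]
    have h1 := hK x hx0.le
    calc x^a * Real.exp (-(m*x^α) + C*x) ≤ x^a * (Real.exp K * Real.exp (-x)) :=
          mul_le_mul_of_nonneg_left h1 (Real.rpow_nonneg hx0.le a)
      _ = Real.exp K * (x^a * Real.exp (-(1*x))) := by rw [one_mul]; ring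
section
variable (α : ℝ) (β c : ℂ)

lemma contOn_rpow' (a : ℝ) : ContinuousOn (fun x : ℝ => x ^ a) (Ioi 0) := fun x hx =>
  (Real.continuousAt_rpow_const x a (Or.inl (ne_of_gt hx))).continuousWithinAt

lemma contOn_cpow : ContinuousOn (fun s : ℝ => (s:ℂ)^β) (Ioi 0) := fun s hs =>
  (Complex.continuousAt_ofReal_cpow_const s β (Or.inr (ne_of_gt hs))).continuousWithinAt

lemma contOn_E (φ : ℝ) : ContinuousOn (fun s : ℝ =>
    Complex.exp (-(((s^α:ℝ):ℂ) * Complex.exp (((α*φ:ℝ):ℂ)*Complex.I))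
      - c * Complex.exp ((φ:ℂ)*Complex.I) * s)) (Ioi 0) := by
  apply Complex.continuous_exp.comp_continuousOn
  apply ContinuousOn.sub
  · exact (((Complex.continuous_ofReal.comp_continuousOn (contOn_rpow' α)).mul
      continuousOn_const)).neg
  · exact (continuous_const.mul Complex.continuous_ofReal).continuousOn

lemma contOn_Faux (φ : ℝ) : ContinuousOn (fun s : ℝ => Faux α β c φ s) (Ioi 0) := by
  unfold Faux
  exact continuousOn_const.mul ((contOn_cpow β).mul (contOn_E α c φ))

lemma contOn_Faux' (φ : ℝ) : ContinuousOn (fun s : ℝ => Faux' α β c φ s) (Ioi 0) := by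
  unfold Faux'
  refine ContinuousOn.mul ?_ (contOn_Faux α β c φ)
  apply ContinuousOn.sub
  apply ContinuousOn.sub continuousOn_const
  · exact ((continuousOn_const.mul
      (Complex.continuous_ofReal.comp_continuousOn (contOn_rpow' α))).mul continuousOn_const)
  · exact (continuous_const.mul Complex.continuous_ofReal).continuousOn

lemma rle (φ : ℝ) : -(‖c‖) ≤ (c * Complex.exp ((φ:ℂ)*Complex.I)).re := by
  have h1 : |(c * Complex.exp ((φ:ℂ)*Complex.I)).re| ≤
      ‖c * Complex.exp ((φ:ℂ)*Complex.I)‖ := Complex.abs_re_le_norm _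
  rw [norm_mul, Complex.norm_exp_ofReal_mul_I, mul_one] at h1
  exact (abs_le.mp h1).1

lemma integrableOn_Faux_of_cos_pos (hα : 1 < α) (hβ : -1 < β.re) {φ : ℝ}
    (hm : 0 < Real.cos (α*φ)) : IntegrableOn (fun s => Faux α β c φ s) (Ioi 0) := by
  have key := (lemInt2 hα hβ hm (‖c‖)).const_mul (Real.exp (|φ| * |(β+1).im|))
  refine key.mono' ((contOn_Faux α β c φ).aestronglyMeasurable measurableSet_Ioi) ?_
  refine (ae_restrict_iff' measurableSet_Ioi).mpr (ae_of_all _ fun s hs => ?_)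
  have hs0 : (0:ℝ) < s := hs
  rw [norm_Faux α β c φ hs0]
  have h1 : Real.exp (-(φ*(β+1).im)) ≤ Real.exp (|φ| * |(β+1).im|) := by
    apply Real.exp_le_exp.2
    calc -(φ*(β+1).im) ≤ |φ*(β+1).im| := neg_le_abs _
      _ = |φ| * |(β+1).im| := abs_mul _ _
  have h2 : Real.exp (-(Real.cos (α*φ) * s^α) - (c*Complex.exp ((φ:ℂ)*Complex.I)).re * s)
      ≤ Real.exp (-(Real.cos (α*φ) * s^α) + ‖c‖ * s) := by
    apply Real.exp_le_exp.2
    nlinarith [rle c φ, hs0.le]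
  exact mul_le_mul h1 (mul_le_mul_of_nonneg_left h2 (Real.rpow_nonneg hs0.le _))
    (by positivity) (Real.exp_pos _).le

lemma integrableOn_Faux_boundary (hβ : -1 < β.re) {φ : ℝ} (hcos : 0 ≤ Real.cos (α*φ))
    {ρ : ℝ} (hρ : 0 < ρ) (hr : ρ ≤ (c * Complex.exp ((φ:ℂ)*Complex.I)).re) :
    IntegrableOn (fun s => Faux α β c φ s) (Ioi 0) := by
  have key := (lemInt1 hβ hρ).const_mul (Real.exp (|φ| * |(β+1).im|))
  refine key.mono' ((contOn_Faux α β c φ).aestronglyMeasurable measurableSet_Ioi) ?_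
  refine (ae_restrict_iff' measurableSet_Ioi).mpr (ae_of_all _ fun s hs => ?_)
  have hs0 : (0:ℝ) < s := hs
  rw [norm_Faux α β c φ hs0]
  have h1 : Real.exp (-(φ*(β+1).im)) ≤ Real.exp (|φ| * |(β+1).im|) := by
    apply Real.exp_le_exp.2
    calc -(φ*(β+1).im) ≤ |φ*(β+1).im| := neg_le_abs _
      _ = |φ| * |(β+1).im| := abs_mul _ _
  have h2 : Real.exp (-(Real.cos (α*φ) * s^α) - (c*Complex.exp ((φ:ℂ)*Complex.I)).re * s)
      ≤ Real.exp (-(ρ*s)) := by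
    apply Real.exp_le_exp.2
    nlinarith [Real.rpow_nonneg hs0.le α, hs0.le]
  exact mul_le_mul h1 (mul_le_mul_of_nonneg_left h2 (Real.rpow_nonneg hs0.le _))
    (by positivity) (Real.exp_pos _).le

lemma norm_Faux'_le (hα : 1 < α) {φ φb m : ℝ} (hφ : |φ| ≤ φb) (hcos : m ≤ Real.cos (α*φ))
    {s : ℝ} (hs : 0 < s) :
    ‖Faux' α β c φ s‖ ≤ Real.exp (φb * |(β+1).im|) *
      ((‖β+1‖ + α * s^α + ‖c‖ * s) *
        (s ^ β.re * Real.exp (-(m*s^α) + ‖c‖ * s))) := by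
  have hb0 : 0 ≤ φb := le_trans (abs_nonneg φ) hφ
  unfold Faux'
  rw [norm_mul, norm_Faux α β c φ hs]
  have hA : ‖Complex.I * (β+1) - Complex.I * α * ((s^α:ℝ):ℂ) *
      Complex.exp (((α*φ:ℝ):ℂ) * Complex.I)
      - Complex.I * c * Complex.exp ((φ:ℂ)*Complex.I) * s‖ ≤
      ‖β+1‖ + α * s^α + ‖c‖ * s := by
    refine le_trans (norm_sub_le _ _) (add_le_add (le_trans (norm_sub_le _ _)
      (add_le_add ?_ ?_)) ?_)
    · simp [norm_mul, Complex.norm_I]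
    · simp only [norm_mul, Complex.norm_I, Complex.norm_real, Real.norm_eq_abs,
        Complex.norm_exp_ofReal_mul_I, one_mul, mul_one]
      rw [abs_of_nonneg (by linarith : (0:ℝ) ≤ α),
        abs_of_nonneg (Real.rpow_nonneg hs.le α)]
    · simp only [norm_mul, Complex.norm_I, Complex.norm_real, Real.norm_eq_abs,
        Complex.norm_exp_ofReal_mul_I, one_mul, mul_one]
      rw [abs_of_nonneg hs.le]
  have h1 : Real.exp (-(φ*(β+1).im)) ≤ Real.exp (φb * |(β+1).im|) := by
    apply Real.exp_le_exp.2
    calc -(φ*(β+1).im) ≤ |φ*(β+1).im| := neg_le_abs _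
      _ = |φ| * |(β+1).im| := abs_mul _ _
      _ ≤ φb * |(β+1).im| := mul_le_mul_of_nonneg_right hφ (abs_nonneg _)
  have h2 : Real.exp (-(Real.cos (α*φ) * s^α) - (c*Complex.exp ((φ:ℂ)*Complex.I)).re * s)
      ≤ Real.exp (-(m*s^α) + ‖c‖ * s) := by
    apply Real.exp_le_exp.2
    nlinarith [rle c φ, hs.le, Real.rpow_nonneg hs.le α]
  have hF : Real.exp (-(φ*(β+1).im)) * (s ^ β.re *
      Real.exp (-(Real.cos (α*φ) * s^α) - (c*Complex.exp ((φ:ℂ)*Complex.I)).re * s)) ≤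
      Real.exp (φb * |(β+1).im|) * (s ^ β.re * Real.exp (-(m*s^α) + ‖c‖ * s)) :=
    mul_le_mul h1 (mul_le_mul_of_nonneg_left h2 (Real.rpow_nonneg hs.le _))
      (by positivity) (Real.exp_pos _).le
  calc _ ≤ (‖β+1‖ + α * s^α + ‖c‖ * s) *
        (Real.exp (φb * |(β+1).im|) * (s ^ β.re * Real.exp (-(m*s^α) + ‖c‖ * s))) :=
        mul_le_mul hA hF (by positivity) (by positivity)
    _ = _ := by ring

lemma integrable_Bnd (hα : 1 < α) (hβ : -1 < β.re) {m : ℝ} (hm : 0 < m) (φb : ℝ) :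
    IntegrableOn (fun s : ℝ => Real.exp (φb * |(β+1).im|) *
      ((‖β+1‖ + α * s^α + ‖c‖ * s) *
        (s ^ β.re * Real.exp (-(m*s^α) + ‖c‖ * s)))) (Ioi 0) := by
  have i1 := (lemInt2 hα hβ hm (‖c‖)).const_mul (‖β+1‖)
  have i2 := (lemInt2 hα (show (-1:ℝ) < β.re + α by linarith) hm
    (‖c‖)).const_mul α
  have i3 := (lemInt2 hα (show (-1:ℝ) < β.re + 1 by linarith) hm
    (‖c‖)).const_mul (‖c‖)
  have hsum := ((i1.add i2).add i3).const_mul (Real.exp (φb * |(β+1).im|))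
  refine IntegrableOn.congr_fun hsum (fun x hx => ?_) measurableSet_Ioi
  have hx0 : (0:ℝ) < x := hx
  have e1 : x ^ (β.re + α) = x ^ β.re * x ^ α := Real.rpow_add hx0 _ _
  have e2 : x ^ (β.re + 1) = x ^ β.re * x := by rw [Real.rpow_add hx0, Real.rpow_one]
  simp only [Pi.add_apply]; rw [e1, e2]; ring


lemma beta_ne (hβ : -1 < β.re) : β + 1 ≠ 0 := by
  intro h
  have : (β+1).re = 0 := by rw [h]; simp
  rw [Complex.add_re, Complex.one_re] at this
  linarith

lemma beta_ne' (hβ : -1 < β.re) : β ≠ -1 := by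
  intro h
  rw [h] at hβ
  simp at hβ

lemma hasDerivAt_Haux (hα : 1 < α) (hβ : -1 < β.re) (φ : ℝ) {s : ℝ} (hs : 0 < s) :
    HasDerivAt (Haux α β c φ)
      (-Complex.I * Complex.exp (-((φ:ℂ)*Complex.I*(β+1))) * Faux' α β c φ s) s := by
  have hne := beta_ne β hβ
  set e₁ : ℂ := Complex.exp (((α*φ:ℝ):ℂ)*Complex.I) with he₁
  set e₂ : ℂ := Complex.exp ((φ:ℂ)*Complex.I) with he₂
  have hd1 : HasDerivAt (fun y : ℝ => (y:ℂ)^(β+1)) ((β+1) * (s:ℂ)^β) s := by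
    have h := (hasDerivAt_ofReal_cpow_const' (ne_of_gt hs) (beta_ne' β hβ)).const_mul (β+1)
    have heq : (fun y : ℝ => (β+1) * ((y:ℂ)^(β+1)/(β+1))) = fun y : ℝ => (y:ℂ)^(β+1) := by
      funext y; rw [mul_comm, div_mul_cancel₀ _ hne]
    rwa [heq] at h
  have hd2 : HasDerivAt (fun y : ℝ => ((y^α : ℝ):ℂ)) (((α * s^(α-1) : ℝ):ℂ)) s :=
    (Real.hasDerivAt_rpow_const (Or.inl (ne_of_gt hs))).ofReal_comp
  have hdid : HasDerivAt (fun y : ℝ => ((y:ℝ):ℂ)) 1 s := by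
    simpa using (hasDerivAt_id s).ofReal_comp
  have hd3 : HasDerivAt (fun y : ℝ => -(((y^α:ℝ):ℂ) * e₁) - c * e₂ * (y:ℂ))
      (-(((α*s^(α-1):ℝ):ℂ) * e₁) - c * e₂) s := by
    have h4 : HasDerivAt (fun y : ℝ => c * e₂ * (y:ℂ)) (c * e₂) s := by
      simpa using (hdid.const_mul (c*e₂))
    exact ((hd2.mul_const e₁).neg).sub h4
  have hd5 := hd1.mul hd3.cexp
  convert hd5 using 1
  · rfl
  · rfl
  have hsplit : ((s:ℝ):ℂ)^(β+1) = (s:ℂ)^β * s := by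
    rw [Complex.cpow_add _ _ (Complex.ofReal_ne_zero.mpr hs.ne'), Complex.cpow_one]
  have hpow : ((α * s^(α-1) : ℝ):ℂ) * (s:ℂ) = (α:ℂ) * ((s^α:ℝ):ℂ) := by
    push_cast
    rw [mul_assoc, ← Complex.ofReal_mul, ← Real.rpow_add_one hs.ne' (α-1)]
    norm_num
  have hQP : Complex.exp (-((φ:ℂ)*Complex.I*(β+1))) * Complex.exp ((φ:ℂ)*Complex.I*(β+1))
      = 1 := by rw [← Complex.exp_add]; simp
  unfold Faux' Faux; rw [← he₁, ← he₂]
  set E : ℂ := Complex.exp (-(((s^α:ℝ):ℂ) * e₁) - c * e₂ * s) with hE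
  set P : ℂ := Complex.exp ((φ:ℂ)*Complex.I*(β+1)) with hP
  set Q : ℂ := Complex.exp (-((φ:ℂ)*Complex.I*(β+1))) with hQ
  rw [hsplit]
  have : Q * P = 1 := hQP
  linear_combination
    (-(Q * P * ((β+1) - (α:ℂ)*((s^α:ℝ):ℂ)*e₁ - c*e₂*(s:ℂ)) * ((s:ℂ)^β * E))) *
      Complex.I_mul_I +
    (((β+1) - (α:ℂ)*((s^α:ℝ):ℂ)*e₁ - c*e₂*(s:ℂ)) * ((s:ℂ)^β * E)) * this +
    (e₁ * ((s:ℂ)^β * E)) * hpow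

lemma hasDerivAt_Faux_phi (φ s : ℝ) :
    HasDerivAt (fun ψ : ℝ => Faux α β c ψ s) (Faux' α β c φ s) φ := by
  have hdid : ∀ ψ : ℝ, HasDerivAt (fun y : ℝ => ((y:ℝ):ℂ)) 1 ψ := fun ψ => by
    simpa using (hasDerivAt_id ψ).ofReal_comp
  have h1 : HasDerivAt (fun ψ : ℝ => Complex.exp ((ψ:ℂ)*Complex.I*(β+1)))
      (Complex.exp ((φ:ℂ)*Complex.I*(β+1)) * (Complex.I*(β+1))) φ := by
    have := (((hdid φ).mul_const Complex.I).mul_const (β+1)).cexp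
    simpa [mul_assoc] using this
  have h2 : HasDerivAt (fun ψ : ℝ => Complex.exp (((α*ψ:ℝ):ℂ)*Complex.I))
      (Complex.exp (((α*φ:ℝ):ℂ)*Complex.I) * ((α:ℂ)*Complex.I)) φ := by
    have hin : HasDerivAt (fun ψ : ℝ => ((α*ψ:ℝ):ℂ)) ((α:ℝ):ℂ) φ := by
      have := ((hasDerivAt_id φ).const_mul α).ofReal_comp
      simpa using this
    have := (hin.mul_const Complex.I).cexp
    simpa [mul_assoc] using this
  have h3 : HasDerivAt (fun ψ : ℝ => Complex.exp ((ψ:ℂ)*Complex.I))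
      (Complex.exp ((φ:ℂ)*Complex.I) * Complex.I) φ := by
    have := ((hdid φ).mul_const Complex.I).cexp
    simpa using this
  have hE : HasDerivAt (fun ψ : ℝ =>
      Complex.exp (-(((s^α:ℝ):ℂ) * Complex.exp (((α*ψ:ℝ):ℂ)*Complex.I))
        - c * Complex.exp ((ψ:ℂ)*Complex.I) * s))
      (Complex.exp (-(((s^α:ℝ):ℂ) * Complex.exp (((α*φ:ℝ):ℂ)*Complex.I))
        - c * Complex.exp ((φ:ℂ)*Complex.I) * s) *
       (-(((s^α:ℝ):ℂ) * (Complex.exp (((α*φ:ℝ):ℂ)*Complex.I) * ((α:ℂ)*Complex.I)))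
        - c * (Complex.exp ((φ:ℂ)*Complex.I) * Complex.I) * s)) φ := by
    exact (((h2.const_mul (((s^α:ℝ):ℂ))).neg).sub ((h3.const_mul c).mul_const (s:ℂ))).cexp
  have hd' := h1.mul (hE.const_mul ((s:ℂ)^β))
  convert hd' using 1
  · rfl
  · rfl
  unfold Faux' Faux; ring

lemma Haux_zero (hα : 1 < α) (hβ : -1 < β.re) (φ : ℝ) : Haux α β c φ 0 = 0 := by
  rw [Haux]
  rw [Real.zero_rpow (by linarith : α ≠ 0)]
  rw [Complex.ofReal_zero, Complex.zero_cpow (beta_ne β hβ)]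
  simp

lemma Haux_cont0 (hα : 1 < α) (hβ : -1 < β.re) (φ : ℝ) :
    ContinuousWithinAt (Haux α β c φ) (Ici 0) 0 := by
  rw [ContinuousWithinAt, Haux_zero α β c hα hβ φ]
  have hre : (0:ℝ) < (β+1).re := by
    rw [Complex.add_re, Complex.one_re]; linarith
  have hcpow : Tendsto (fun s : ℝ => (s:ℂ)^(β+1)) (𝓝[Ici 0] 0) (𝓝 0) := by
    have hb : ∀ᶠ s : ℝ in 𝓝[Ici 0] 0, ‖(s:ℂ)^(β+1)‖ ≤ s ^ ((β+1).re) := by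
      filter_upwards [self_mem_nhdsWithin] with s hs
      rcases eq_or_lt_of_le (mem_Ici.mp hs) with h | h
      · rw [← h]
        simp only [← h, Complex.ofReal_zero, Complex.zero_cpow (beta_ne β hβ), norm_zero]
        positivity
      · rw [Complex.norm_cpow_eq_rpow_re_of_pos h]
    have hc := (Real.continuousAt_rpow_const 0 ((β+1).re) (Or.inr hre.le)).tendsto
    rw [Real.zero_rpow (ne_of_gt hre)] at hc
    exact squeeze_zero_norm' hb (hc.mono_left nhdsWithin_le_nhds)
  have hE : Tendsto (fun s : ℝ =>
      Complex.exp (-(((s^α:ℝ):ℂ) * Complex.exp (((α*φ:ℝ):ℂ)*Complex.I))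
        - c * Complex.exp ((φ:ℂ)*Complex.I) * s)) (𝓝[Ici 0] 0)
      (𝓝 (Complex.exp (-((((0:ℝ)^α:ℝ):ℂ) * Complex.exp (((α*φ:ℝ):ℂ)*Complex.I))
        - c * Complex.exp ((φ:ℂ)*Complex.I) * (0:ℝ)))) := by
    apply Filter.Tendsto.mono_left _ nhdsWithin_le_nhds
    apply ContinuousAt.tendsto
    apply Complex.continuous_exp.continuousAt.comp
    apply ContinuousAt.sub
    · exact (((Complex.continuous_ofReal.continuousAt.comp
        (Real.continuousAt_rpow_const 0 α (Or.inr (by linarith)))).mul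
        continuousAt_const).neg)
    · exact (continuousAt_const.mul Complex.continuous_ofReal.continuousAt)
  have := hcpow.mul hE
  rw [zero_mul] at this
  exact this

lemma Haux_top (hα : 1 < α) (hβ : -1 < β.re) {φ : ℝ} (hm : 0 < Real.cos (α*φ)) :
    Tendsto (Haux α β c φ) atTop (𝓝 0) := by
  obtain ⟨K, hK⟩ := lemExp hα hm (‖c‖)
  have hb : ∀ᶠ s : ℝ in atTop,
      ‖Haux α β c φ s‖ ≤ Real.exp K * (s ^ ((β+1).re) * Real.exp (-1 * s)) := by
    filter_upwards [eventually_gt_atTop (0:ℝ)] with s hs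
    rw [norm_Haux α β c φ hs]
    have h2 : Real.exp (-(Real.cos (α*φ) * s^α) - (c*Complex.exp ((φ:ℂ)*Complex.I)).re * s)
        ≤ Real.exp K * Real.exp (-s) := by
      refine le_trans ?_ (hK s hs.le)
      apply Real.exp_le_exp.2
      nlinarith [rle c φ, hs.le]
    calc s ^ ((β+1).re) *
          Real.exp (-(Real.cos (α*φ) * s^α) - (c*Complex.exp ((φ:ℂ)*Complex.I)).re * s)
        ≤ s ^ ((β+1).re) * (Real.exp K * Real.exp (-s)) :=
          mul_le_mul_of_nonneg_left h2 (Real.rpow_nonneg hs.le _)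
      _ = Real.exp K * (s ^ ((β+1).re) * Real.exp (-1 * s)) := by rw [neg_one_mul]; ring
  have ht := (tendsto_rpow_mul_exp_neg_mul_atTop_nhds_zero ((β+1).re) 1 one_pos).const_mul
      (Real.exp K)
  refine squeeze_zero_norm' hb ?_
  simpa using ht

lemma integrable_Faux' (hα : 1 < α) (hβ : -1 < β.re) {φ : ℝ} (hm : 0 < Real.cos (α*φ)) :
    IntegrableOn (fun s => Faux' α β c φ s) (Ioi 0) := by
  refine (integrable_Bnd α β c hα hβ hm |φ|).mono'
    ((contOn_Faux' α β c φ).aestronglyMeasurable measurableSet_Ioi) ?_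
  refine (ae_restrict_iff' measurableSet_Ioi).mpr (ae_of_all _ fun s hs => ?_)
  exact norm_Faux'_le α β c hα le_rfl le_rfl hs

lemma integral_Faux'_zero (hα : 1 < α) (hβ : -1 < β.re) {φ : ℝ}
    (hm : 0 < Real.cos (α*φ)) : ∫ s in Ioi (0:ℝ), Faux' α β c φ s = 0 := by
  have hint := integrable_Faux' α β c hα hβ hm
  have hint' : IntegrableOn (fun s : ℝ =>
      -Complex.I * Complex.exp (-((φ:ℂ)*Complex.I*(β+1))) * Faux' α β c φ s) (Ioi 0) := by
    simpa [mul_assoc, IntegrableOn] using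
      hint.const_mul (-Complex.I * Complex.exp (-((φ:ℂ)*Complex.I*(β+1))))
  have key := integral_Ioi_of_hasDerivAt_of_tendsto (Haux_cont0 α β c hα hβ φ)
    (fun s hs => hasDerivAt_Haux α β c hα hβ φ hs) hint' (Haux_top α β c hα hβ hm)
  rw [Haux_zero α β c hα hβ φ, sub_zero] at key
  have key2 : -Complex.I * Complex.exp (-((φ:ℂ)*Complex.I*(β+1))) *
      ∫ s in Ioi (0:ℝ), Faux' α β c φ s = 0 := by
    rw [← MeasureTheory.integral_const_mul]; exact key
  rcases mul_eq_zero.mp key2 with h | h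
  · exfalso
    rcases mul_eq_zero.mp h with h' | h'
    · exact Complex.I_ne_zero (neg_eq_zero.mp h')
    · exact Complex.exp_ne_zero _ h'
  · exact h

lemma hasDerivAt_K (hα : 1 < α) (hβ : -1 < β.re) {φ₀ : ℝ} (h0 : 0 ≤ φ₀)
    (h1 : φ₀ < Real.pi/(2*α)) :
    HasDerivAt (fun φ => ∫ s in Ioi (0:ℝ), Faux α β c φ s) 0 φ₀ := by
  have hπ := Real.pi_pos
  have hα0 : (0:ℝ) < α := by linarith
  set Φ := Real.pi/(2*α) with hΦ
  have hΦpos : 0 < Φ := by rw [hΦ]; positivity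
  set ε := (Φ - φ₀)/2 with hε
  have hεpos : 0 < ε := by rw [hε]; linarith
  set φb := (Φ + φ₀)/2 with hφb
  have hφbΦ : φb < Φ := by rw [hφb]; linarith
  have hφbpos : 0 < φb := by rw [hφb]; linarith
  have hαφb : α * φb < Real.pi/2 := by
    have : α * φb < α * Φ := by gcongr
    calc α * φb < α * Φ := this
      _ = Real.pi/2 := by rw [hΦ]; field_simp
  have hcosb : 0 < Real.cos (α*φb) :=
    Real.cos_pos_of_mem_Ioo ⟨by nlinarith, hαφb⟩
  have hball : ∀ φ ∈ Metric.ball φ₀ ε, |φ| ≤ φb ∧ Real.cos (α*φb) ≤ Real.cos (α*φ) := by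
    intro φ hφ
    rw [Metric.mem_ball, Real.dist_eq, abs_lt] at hφ
    have hup : φ ≤ φb := by rw [hφb]; linarith [hφ.2]
    have hlo : -φb ≤ φ := by rw [hφb]; linarith [hφ.1]
    have habs : |φ| ≤ φb := abs_le.mpr ⟨hlo, hup⟩
    refine ⟨habs, ?_⟩
    have h3 : |α*φ| ≤ α*φb := by
      rw [abs_mul, abs_of_pos hα0]
      exact mul_le_mul_of_nonneg_left habs hα0.le
    calc Real.cos (α*φb) ≤ Real.cos |α*φ| :=
          Real.cos_le_cos_of_nonneg_of_le_pi (abs_nonneg _) (by linarith) h3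
      _ = Real.cos (α*φ) := Real.cos_abs _
  have hcos0 : 0 < Real.cos (α*φ₀) :=
    lt_of_lt_of_le hcosb (hball φ₀ (Metric.mem_ball_self hεpos)).2
  have hder := hasDerivAt_integral_of_dominated_loc_of_deriv_le (μ := volume.restrict (Ioi 0))
    (F := fun φ s => Faux α β c φ s) (F' := fun φ s => Faux' α β c φ s)
    (bound := fun s : ℝ => Real.exp (φb * |(β+1).im|) *
      ((‖β+1‖ + α * s^α + ‖c‖ * s) *
        (s ^ β.re * Real.exp (-(Real.cos (α*φb)*s^α) + ‖c‖ * s))))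
    (Metric.ball_mem_nhds φ₀ hεpos)
    (Eventually.of_forall fun φ =>
      (contOn_Faux α β c φ).aestronglyMeasurable measurableSet_Ioi)
    (integrableOn_Faux_of_cos_pos α β c hα hβ hcos0)
    ((contOn_Faux' α β c φ₀).aestronglyMeasurable measurableSet_Ioi)
    ((ae_restrict_iff' measurableSet_Ioi).mpr (ae_of_all _ fun s hs => fun φ hφ =>
      norm_Faux'_le α β c hα (hball φ hφ).1 (hball φ hφ).2 hs))
    (integrable_Bnd α β c hα hβ hcosb φb)
    (ae_of_all _ fun s => fun φ _ => hasDerivAt_Faux_phi α β c φ s)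
  have hK := hder.2
  rwa [integral_Faux'_zero α β c hα hβ hcos0] at hK

lemma tendsto_K_Phi (hα : 1 < α) (hβ : -1 < β.re)
    (hc : 0 < (c * Complex.exp ((((Real.pi/(2*α)) : ℝ):ℂ)*Complex.I)).re) :
    Tendsto (fun φ => ∫ s in Ioi (0:ℝ), Faux α β c φ s)
      (𝓝[Ico 0 (Real.pi/(2*α))] (Real.pi/(2*α)))
      (𝓝 (∫ s in Ioi (0:ℝ), Faux α β c (Real.pi/(2*α)) s)) := by
  have hπ := Real.pi_pos
  have hα0 : (0:ℝ) < α := by linarith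
  set Φ := Real.pi/(2*α) with hΦ
  set ρ := (c * Complex.exp (((Φ:ℝ):ℂ)*Complex.I)).re / 2 with hρ
  have hρpos : 0 < ρ := by rw [hρ]; linarith
  have hrcont : Continuous fun φ : ℝ => (c * Complex.exp ((φ:ℂ)*Complex.I)).re :=
    Complex.continuous_re.comp (continuous_const.mul (Complex.continuous_exp.comp
      (Complex.continuous_ofReal.mul continuous_const)))
  have hev : ∀ᶠ φ : ℝ in 𝓝[Ico 0 Φ] Φ, ρ < (c * Complex.exp ((φ:ℂ)*Complex.I)).re := by
    have h2 : ∀ᶠ r in 𝓝 ((c * Complex.exp (((Φ:ℝ):ℂ)*Complex.I)).re), ρ < r :=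
      eventually_gt_nhds (by rw [hρ]; linarith)
    exact (hrcont.continuousAt.eventually h2).filter_mono nhdsWithin_le_nhds
  apply MeasureTheory.tendsto_integral_filter_of_dominated_convergence
    (bound := fun s : ℝ => Real.exp (Φ*|(β+1).im|) * (s ^ β.re * Real.exp (-(ρ*s))))
  · exact Eventually.of_forall fun φ =>
      (contOn_Faux α β c φ).aestronglyMeasurable measurableSet_Ioi
  · filter_upwards [hev, self_mem_nhdsWithin] with φ hρφ hmem
    refine (ae_restrict_iff' measurableSet_Ioi).mpr (ae_of_all _ fun s hs => ?_)
    have hs0 : (0:ℝ) < s := hs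
    rw [norm_Faux α β c φ hs0]
    have hφ0 : 0 ≤ φ := hmem.1
    have hφΦ : φ < Φ := hmem.2
    have hcos : 0 ≤ Real.cos (α*φ) := by
      apply Real.cos_nonneg_of_mem_Icc
      constructor
      · nlinarith
      · have : α * φ ≤ α * Φ := by nlinarith
        calc α*φ ≤ α*Φ := this
          _ = Real.pi/2 := by rw [hΦ]; field_simp
    have h1 : Real.exp (-(φ*(β+1).im)) ≤ Real.exp (Φ * |(β+1).im|) := by
      apply Real.exp_le_exp.2
      calc -(φ*(β+1).im) ≤ |φ*(β+1).im| := neg_le_abs _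
        _ = |φ| * |(β+1).im| := abs_mul _ _
        _ ≤ Φ * |(β+1).im| := by
            apply mul_le_mul_of_nonneg_right _ (abs_nonneg _)
            rw [abs_of_nonneg hφ0]; linarith
    have h2 : Real.exp (-(Real.cos (α*φ) * s^α) - (c*Complex.exp ((φ:ℂ)*Complex.I)).re * s)
        ≤ Real.exp (-(ρ*s)) := by
      apply Real.exp_le_exp.2
      nlinarith [Real.rpow_nonneg hs0.le α, hs0.le]
    exact mul_le_mul h1 (mul_le_mul_of_nonneg_left h2 (Real.rpow_nonneg hs0.le _))
      (by positivity) (Real.exp_pos _).le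
  · exact (lemInt1 hβ hρpos).const_mul _
  · refine ae_of_all _ fun s => ?_
    exact ((hasDerivAt_Faux_phi α β c Φ s).continuousAt.tendsto).mono_left
      nhdsWithin_le_nhds

lemma K_eq (hα : 1 < α) (hβ : -1 < β.re)
    (hc : 0 < (c * Complex.exp ((((Real.pi/(2*α)) : ℝ):ℂ)*Complex.I)).re) :
    ∫ s in Ioi (0:ℝ), Faux α β c 0 s =
      ∫ s in Ioi (0:ℝ), Faux α β c (Real.pi/(2*α)) s := by
  have hπ := Real.pi_pos
  have hα0 : (0:ℝ) < α := by linarith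
  set Φ := Real.pi/(2*α) with hΦ
  have hΦpos : 0 < Φ := by rw [hΦ]; positivity
  set K : ℝ → ℂ := fun φ => ∫ s in Ioi (0:ℝ), Faux α β c φ s with hK
  have hconst : ∀ φ ∈ Ico 0 Φ, K φ = K 0 := by
    intro φ hφ
    rcases eq_or_lt_of_le hφ.1 with h | h
    · rw [← h]
    · have hcont : ContinuousOn K (Icc 0 φ) := fun x hx =>
        (hasDerivAt_K α β c hα hβ hx.1
          (lt_of_le_of_lt hx.2 hφ.2)).continuousAt.continuousWithinAt
      have hderiv : ∀ x ∈ Ico 0 φ, HasDerivWithinAt K 0 (Ici x) x := fun x hx =>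
        (hasDerivAt_K α β c hα hβ hx.1 (lt_trans hx.2 hφ.2)).hasDerivWithinAt
      exact constant_of_has_deriv_right_zero hcont hderiv φ
        (mem_Icc.mpr ⟨hφ.1, le_refl φ⟩)
  have hne : (𝓝[Ico 0 Φ] Φ).NeBot := by
    apply mem_closure_iff_nhdsWithin_neBot.mp
    rw [closure_Ico (ne_of_lt hΦpos)]
    exact ⟨hΦpos.le, le_refl Φ⟩
  have h1 := tendsto_K_Phi α β c hα hβ hc
  have h2 : Tendsto K (𝓝[Ico 0 Φ] Φ) (𝓝 (K 0)) := by
    apply Tendsto.congr' _ tendsto_const_nhds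
    filter_upwards [self_mem_nhdsWithin] with φ hφ
    exact (hconst φ hφ).symm
  exact tendsto_nhds_unique h2 h1
end


/-- The entire extension of the Fourier–Laplace transform `F_{α,β}`. -/
noncomputable def Gab (α : ℝ) (β : ℂ) (z : ℂ) : ℂ :=
  Complex.exp (Complex.I * Real.pi * (β + 1) / (2 * α)) *
    ∫ t in Ioi (0:ℝ), (t : ℂ) ^ β *
      Complex.exp (-(↑(t ^ α) : ℂ) -
        Complex.I * Complex.exp (Complex.I * Real.pi / (2 * α)) * z * t)

/-- For `−π − π/α < θ < −π/α`, the entire extension of `F_{α,β}` is given by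
the twice-rotated absolutely convergent integral. -/
theorem stmt_4 (α : ℝ) (hα : 1 < α) (β : ℂ) (hβ : -1 < β.re)
    (R : ℝ) (hR : 0 < R) (θ : ℝ)
    (hθ₁ : -Real.pi - Real.pi / α < θ) (hθ₂ : θ < -Real.pi / α) :
    IntegrableOn (fun t : ℝ => (t : ℂ) ^ β *
      Complex.exp (-(Complex.I * (↑(t ^ α) : ℂ)) +
        Complex.exp (Complex.I * (θ - Real.pi / 2 + Real.pi / α)) * R * t)) (Ioi 0) ∧
    Gab α β (R * Complex.exp (Complex.I * θ)) =
      Complex.exp (Complex.I * Real.pi * (β + 1) / α) *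
        ∫ t in Ioi (0:ℝ), (t : ℂ) ^ β *
          Complex.exp (-(Complex.I * (↑(t ^ α) : ℂ)) +
            Complex.exp (Complex.I * (θ - Real.pi / 2 + Real.pi / α)) * R * t) := by
  have hπ := Real.pi_pos
  have hα0 : (0:ℝ) < α := by linarith
  have hαne : (α:ℝ) ≠ 0 := ne_of_gt hα0
  have hαcne : ((α:ℝ):ℂ) ≠ 0 := Complex.ofReal_ne_zero.mpr hαne
  set Φ : ℝ := Real.pi/(2*α) with hΦ
  set z : ℂ := (R:ℂ) * Complex.exp (Complex.I * (θ:ℂ)) with hz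
  set c : ℂ := Complex.I * Complex.exp (Complex.I * (Real.pi:ℂ) / (2 * (α:ℂ))) * z with hc
  have hΦc : ((Φ:ℝ):ℂ) = (Real.pi:ℂ)/(2*(α:ℂ)) := by rw [hΦ]; push_cast; ring
  have hI : Complex.I = Complex.exp (((Real.pi/2 : ℝ):ℂ) * Complex.I) := by
    rw [Complex.exp_mul_I, ← Complex.ofReal_cos, ← Complex.ofReal_sin,
      Real.cos_pi_div_two, Real.sin_pi_div_two]
    simp
  have hαΦ : ((α*Φ : ℝ):ℂ) = ((Real.pi/2 : ℝ):ℂ) := by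
    congr 1
    rw [hΦ]; field_simp
  have hexpI : Complex.exp (((α*Φ:ℝ):ℂ) * Complex.I) = Complex.I := by
    rw [hαΦ, ← hI]
  -- key rotation identity
  have hkey : c * Complex.exp (((Φ:ℝ):ℂ)*Complex.I) =
      -(Complex.exp (Complex.I * ((θ:ℂ) - (Real.pi:ℂ)/2 + (Real.pi:ℂ)/(α:ℂ))) * (R:ℂ)) := by
    have e1 : c * Complex.exp (((Φ:ℝ):ℂ)*Complex.I) =
        (R:ℂ) * (Complex.exp (((Real.pi/2 : ℝ):ℂ) * Complex.I) *
          (Complex.exp (Complex.I * (Real.pi:ℂ) / (2 * (α:ℂ))) *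
            (Complex.exp (Complex.I * (θ:ℂ)) * Complex.exp (((Φ:ℝ):ℂ)*Complex.I)))) := by
      rw [hc, hz, ← hI]; ring
    rw [e1, ← Complex.exp_add, ← Complex.exp_add, ← Complex.exp_add]
    have e2 : ((Real.pi/2 : ℝ):ℂ) * Complex.I + (Complex.I * (Real.pi:ℂ) / (2 * (α:ℂ)) +
        (Complex.I * (θ:ℂ) + ((Φ:ℝ):ℂ)*Complex.I)) =
        (Real.pi:ℂ) * Complex.I +
          Complex.I * ((θ:ℂ) - (Real.pi:ℂ)/2 + (Real.pi:ℂ)/(α:ℂ)) := by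
      rw [hΦc]; push_cast; field_simp; ring
    rw [e2, Complex.exp_add, Complex.exp_pi_mul_I]; ring
  -- positivity of the real part at the endpoint
  set W : ℝ := θ - Real.pi/2 + Real.pi/α with hW
  have hWc : (θ:ℂ) - (Real.pi:ℂ)/2 + (Real.pi:ℂ)/(α:ℂ) = ((W:ℝ):ℂ) := by
    rw [hW]; push_cast; ring
  have hdiv : -Real.pi / α = -(Real.pi/α) := by ring
  have hcosW : Real.cos W < 0 := by
    have h1' : Real.pi/2 < -W := by rw [hW]; rw [hdiv] at hθ₂; linarith
    have h2' : -W < Real.pi + Real.pi/2 := by rw [hW]; linarith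
    have := Real.cos_neg_of_pi_div_two_lt_of_lt h1' h2'
    rwa [Real.cos_neg] at this
  have hcΦ : 0 < (c * Complex.exp (((Φ:ℝ):ℂ)*Complex.I)).re := by
    rw [hkey, hWc]
    rw [mul_comm Complex.I ((W:ℝ):ℂ)]
    simp only [Complex.neg_re, Complex.mul_re, Complex.exp_ofReal_mul_I_re,
      Complex.exp_ofReal_mul_I_im, Complex.ofReal_re, Complex.ofReal_im,
      mul_zero, zero_mul, sub_zero]
    nlinarith
  have hcosΦ : Real.cos (α*Φ) = 0 := by
    have : α*Φ = Real.pi/2 := by rw [hΦ]; field_simp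
    rw [this, Real.cos_pi_div_two]
  -- identification of the rotated integrand
  have hFΦ : ∀ t : ℝ, Faux α β c Φ t = Complex.exp (((Φ:ℝ):ℂ)*Complex.I*(β+1)) *
      ((t:ℂ)^β * Complex.exp (-(Complex.I * ((t^α : ℝ):ℂ)) +
        Complex.exp (Complex.I * ((θ:ℂ) - (Real.pi:ℂ)/2 + (Real.pi:ℂ)/(α:ℂ))) *
          (R:ℂ) * (t:ℂ))) := by
    intro t
    rw [Faux, hexpI, hkey]
    congr 2
    exact congrArg Complex.exp (by ring)
  have hF0 : ∀ t : ℝ, Faux α β c 0 t =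
      (t:ℂ)^β * Complex.exp (-(((t^α : ℝ):ℂ)) - c * (t:ℂ)) := by
    intro t
    rw [Faux]
    simp
  -- the two halves
  have hintΦ : IntegrableOn (fun s => Faux α β c Φ s) (Ioi 0) :=
    integrableOn_Faux_boundary α β c hβ (le_of_eq hcosΦ.symm) hcΦ le_rfl
  have hgfun : (fun t : ℝ => (t:ℂ)^β * Complex.exp (-(Complex.I * ((t^α : ℝ):ℂ)) +
        Complex.exp (Complex.I * ((θ:ℂ) - (Real.pi:ℂ)/2 + (Real.pi:ℂ)/(α:ℂ))) *
          (R:ℂ) * (t:ℂ))) =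
      fun t : ℝ => Complex.exp (-(((Φ:ℝ):ℂ)*Complex.I*(β+1))) * Faux α β c Φ t := by
    funext t
    rw [hFΦ t, ← mul_assoc, ← Complex.exp_add, neg_add_cancel, Complex.exp_zero, one_mul]
  constructor
  · rw [hgfun]
    exact hintΦ.const_mul _
  · have hKeq := K_eq α β c hα hβ hcΦ
    rw [Gab]
    have hint0 : (fun t : ℝ => (t:ℂ)^β * Complex.exp (-(((t^α : ℝ):ℂ)) -
        Complex.I * Complex.exp (Complex.I * (Real.pi:ℂ) / (2 * (α:ℂ))) * z * (t:ℂ))) =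
        fun t : ℝ => Faux α β c 0 t := by
      funext t
      rw [hF0 t, hc]
    rw [hint0, hKeq]
    have hsplit2 : (fun s : ℝ => Faux α β c Φ s) = fun s : ℝ =>
        Complex.exp (((Φ:ℝ):ℂ)*Complex.I*(β+1)) *
          ((s:ℂ)^β * Complex.exp (-(Complex.I * ((s^α : ℝ):ℂ)) +
            Complex.exp (Complex.I * ((θ:ℂ) - (Real.pi:ℂ)/2 + (Real.pi:ℂ)/(α:ℂ))) *
              (R:ℂ) * (s:ℂ))) := funext hFΦ
    rw [hsplit2, MeasureTheory.integral_const_mul, ← mul_assoc, ← Complex.exp_add]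
    congr 2
    rw [hΦc]; field_simp; ring
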